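/- arXiv:2111.00479 — 4 statements merged into one kernel-verified Lean document; each statement's English description precedes it below -/
import Mathlib

section
/- Let T, S be payoff parameters with S<0, 1<T, T+S<2, let δ∈(δ_c,1) where δ_c=max((T−1)/T, −S/(1−S)), assume additionally 0<T+S, and let p∈[0,1]^5 be a pcZD strategy. Then every adapting path λ:{0,1,…,N}→[0,1]^5 of the adaptive player Y terminates at a strategy q*=λ(N) satisfying either (q*_0,q*_1,q*_2)=(1,1,1), or (p_0,p_1,q*_0,q*_1)=(1,1,1,1); moreover the first case holds whenever p_0<1 or p_1<1. -/
noncomputable section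
namespace ZDGame

open Matrix

/-- membership in the unit box `[0,1]^5` -/
def unitBox (v : Fin 5 → ℝ) : Prop := ∀ i, 0 ≤ v i ∧ v i ≤ 1

/-- the Markov transition matrix of the repeated game -/
def Mmat (p q : Fin 5 → ℝ) : Matrix (Fin 4) (Fin 4) ℝ :=
  !![p 1 * q 1, p 1 * (1 - q 1), (1 - p 1) * q 1, (1 - p 1) * (1 - q 1);
     p 2 * q 3, p 2 * (1 - q 3), (1 - p 2) * q 3, (1 - p 2) * (1 - q 3);
     p 3 * q 2, p 3 * (1 - q 2), (1 - p 3) * q 2, (1 - p 3) * (1 - q 2);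
     p 4 * q 4, p 4 * (1 - q 4), (1 - p 4) * q 4, (1 - p 4) * (1 - q 4)]

/-- the initial distribution v(0) -/
def vInit (p q : Fin 5 → ℝ) : Fin 4 → ℝ :=
  ![p 0 * q 0, p 0 * (1 - q 0), (1 - p 0) * q 0, (1 - p 0) * (1 - q 0)]

def SYvec (T S : ℝ) : Fin 4 → ℝ := ![1, T, S, 0]
def SXvec (T S : ℝ) : Fin 4 → ℝ := ![1, S, T, 0]
def ones4 : Fin 4 → ℝ := ![1, 1, 1, 1]

/-- average expected payoff with payoff vector `f` -/
def payoff (δ : ℝ) (p q : Fin 5 → ℝ) (f : Fin 4 → ℝ) : ℝ :=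
  (1 - δ) * dotProduct (Matrix.vecMul (vInit p q) (1 - δ • Mmat p q)⁻¹) f

def sX (δ T S : ℝ) (p q : Fin 5 → ℝ) : ℝ := payoff δ p q (SXvec T S)
def sY (δ T S : ℝ) (p q : Fin 5 → ℝ) : ℝ := payoff δ p q (SYvec T S)

/-- the matrix `A(p,q,f)` from the determinant representation -/
def Amat (δ : ℝ) (p q : Fin 5 → ℝ) (f : Fin 4 → ℝ) : Matrix (Fin 4) (Fin 4) ℝ :=
  !![-1 + δ * p 1 * q 1 + (1 - δ) * p 0 * q 0, -1 + δ * p 1 + (1 - δ) * p 0,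
       -1 + δ * q 1 + (1 - δ) * q 0, f 0;
     δ * p 3 * q 2 + (1 - δ) * p 0 * q 0, δ * p 3 + (1 - δ) * p 0,
       -1 + δ * q 2 + (1 - δ) * q 0, f 1;
     δ * p 2 * q 3 + (1 - δ) * p 0 * q 0, -1 + δ * p 2 + (1 - δ) * p 0,
       δ * q 3 + (1 - δ) * q 0, f 2;
     δ * p 4 * q 4 + (1 - δ) * p 0 * q 0, δ * p 4 + (1 - δ) * p 0,
       δ * q 4 + (1 - δ) * q 0, f 3]

/-- `D(p,q,f) = det A(p,q,f)` -/
def Dd (δ : ℝ) (p q : Fin 5 → ℝ) (f : Fin 4 → ℝ) : ℝ := (Amat δ p q f).det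

/-- pcZD strategy -/
def IsPcZD (δ T S : ℝ) (p : Fin 5 → ℝ) : Prop :=
  ∃ φ χ κ : ℝ, 0 < φ ∧ 1 ≤ χ ∧
    δ * p 1 + (1 - δ) * p 0 = 1 - φ * (χ - 1) * (1 - κ) ∧
    δ * p 2 + (1 - δ) * p 0 = 1 - φ * (χ * T - S - (χ - 1) * κ) ∧
    δ * p 3 + (1 - δ) * p 0 = φ * (T - χ * S + (χ - 1) * κ) ∧
    δ * p 4 + (1 - δ) * p 0 = φ * (χ - 1) * κ

/-- partial derivative of a function of the strategy vector `q`
in the coordinate `j`, taken at `q` -/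
def pderiv (f : (Fin 5 → ℝ) → ℝ) (j : Fin 5) (q : Fin 5 → ℝ) : ℝ :=
  deriv (fun t => f (Function.update q j t)) (q j)

/-- the 3×3 minor `M_ℓ` of `A(p,q,f)` (delete row `ℓ` and the 4th column);
here `ℓ : Fin 4` corresponds to the paper's `ℓ+1 ∈ {1,2,3,4}` -/
def Mminor (δ : ℝ) (p q : Fin 5 → ℝ) (ℓ : Fin 4) : Matrix (Fin 3) (Fin 3) ℝ :=
  Matrix.of fun i j => Amat δ p q ones4 (ℓ.succAbove i) (Fin.castSucc j)

/-- the index map λ(1)=1, λ(2)=3, λ(3)=2, λ(4)=4 (0-based on the left) -/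
def lamIdx : Fin 4 → Fin 5 := ![1, 3, 2, 4]

/-- the vector `r_ℓ` -/
def rvec (δ : ℝ) (p q : Fin 5 → ℝ) (ℓ : Fin 4) (i : Fin 3) : ℝ :=
  (p (lamIdx ℓ) * Amat δ p q ones4 ℓ 2 - Amat δ p q ones4 ℓ 0)
    + Mminor δ p q ℓ i 0 - p (lamIdx ℓ) * Mminor δ p q ℓ i 2

/-- the 2×2 determinants `𝔡_ℓ`; `ℓ : Fin 4` corresponds to the paper's `ℓ+1` -/
def frakD (δ T S : ℝ) (p q : Fin 5 → ℝ) (ℓ : Fin 4) : ℝ :=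
  ![ (rvec δ p q 0 0 + rvec δ p q 0 1) * (-1) - (T + S - 2) * rvec δ p q 0 2,
     (rvec δ p q 1 1 - 2 * rvec δ p q 1 2) * 1 - (T + S) * (rvec δ p q 1 0 - rvec δ p q 1 2),
     (rvec δ p q 2 0 - rvec δ p q 2 2) * (T + S) - 1 * (rvec δ p q 2 1 - 2 * rvec δ p q 2 2),
     (rvec δ p q 3 1 + rvec δ p q 3 2) * 1 - (T + S) * rvec δ p q 3 0 ] ℓ

def u1 (δ : ℝ) (p q : Fin 5 → ℝ) : ℝ :=
  (-1 + δ * q 1 - δ * q 4) * p 0 - (-1 + δ * p 1 * q 1 - δ * p 4 * q 4)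
def u2 (δ : ℝ) (p q : Fin 5 → ℝ) : ℝ :=
  (-1 + δ * q 2 - δ * q 4) * p 0 - (δ * p 3 * q 2 - δ * p 4 * q 4)
def u3 (δ : ℝ) (p q : Fin 5 → ℝ) : ℝ :=
  (δ * q 3 - δ * q 4) * p 0 - (δ * p 2 * q 3 - δ * p 4 * q 4)

/-- the determinant `𝔡_0 = det [[u1, 1], [u2+u3, T+S]]` -/
def frakD0 (δ T S : ℝ) (p q : Fin 5 → ℝ) : ℝ :=
  u1 δ p q * (T + S) - 1 * (u2 δ p q + u3 δ p q)


lemma Mmat_nonneg {p q : Fin 5 → ℝ} (hp : unitBox p) (hq : unitBox q) :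
    ∀ i j, 0 ≤ Mmat p q i j := by
  have h1 := hp 1; have h2 := hp 2; have h3 := hp 3; have h4 := hp 4
  have k1 := hq 1; have k2 := hq 2; have k3 := hq 3; have k4 := hq 4
  intro i j
  fin_cases i <;> fin_cases j <;>
    simp [Mmat] <;>
    apply mul_nonneg <;> linarith [h1.1, h1.2, h2.1, h2.2, h3.1, h3.2, h4.1, h4.2,
      k1.1, k1.2, k2.1, k2.2, k3.1, k3.2, k4.1, k4.2]

lemma Mmat_rowsum (p q : Fin 5 → ℝ) : ∀ i, ∑ j, Mmat p q i j = 1 := by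
  intro i
  fin_cases i <;> simp [Mmat, Fin.sum_univ_four] <;> ring

lemma vInit_nonneg {p q : Fin 5 → ℝ} (hp : unitBox p) (hq : unitBox q) :
    ∀ i, 0 ≤ vInit p q i := by
  have h0 := hp 0; have k0 := hq 0
  intro i
  fin_cases i <;> simp [vInit] <;> apply mul_nonneg <;> linarith [h0.1, h0.2, k0.1, k0.2]

lemma vInit_sum (p q : Fin 5 → ℝ) : ∑ i, vInit p q i = 1 := by
  simp [vInit, Fin.sum_univ_four]; ring

lemma det_one_sub_smul_ne_zero (δ : ℝ) (hδ0 : 0 ≤ δ) (hδ1 : δ < 1)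
    (M : Matrix (Fin 4) (Fin 4) ℝ) (hM0 : ∀ i j, 0 ≤ M i j) (hM1 : ∀ i, ∑ j, M i j = 1) :
    (1 - δ • M).det ≠ 0 := by
  intro hdet
  obtain ⟨x, hx0, hx⟩ := (Matrix.exists_mulVec_eq_zero_iff).mpr hdet
  have hxi : ∀ i, x i = δ * ∑ j, M i j * x j := by
    intro i
    have h := congrFun hx i
    simp [Matrix.mulVec, dotProduct, Matrix.sub_apply, Matrix.smul_apply,
      Matrix.one_apply, sub_mul, Finset.sum_sub_distrib, smul_eq_mul, mul_assoc,
      Finset.mul_sum] at h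
    rw [Finset.mul_sum]
    linarith [h]
  obtain ⟨i₀, -, hmax⟩ := Finset.exists_max_image Finset.univ (fun i => |x i|) ⟨0, Finset.mem_univ 0⟩
  have h1 : |x i₀| ≤ δ * |x i₀| := by
    calc |x i₀| = δ * |∑ j, M i₀ j * x j| := by rw [hxi i₀, abs_mul, abs_of_nonneg hδ0]
    _ ≤ δ * ∑ j, |M i₀ j * x j| := by
        gcongr; exact Finset.abs_sum_le_sum_abs _ _
    _ ≤ δ * ∑ j, M i₀ j * |x i₀| := by
        gcongr with j
        rw [abs_mul, abs_of_nonneg (hM0 i₀ j)]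
        exact mul_le_mul_of_nonneg_left (hmax j (Finset.mem_univ j)) (hM0 i₀ j)
    _ = δ * |x i₀| := by rw [← Finset.sum_mul, hM1 i₀, one_mul]
  have h2 : |x i₀| = 0 := by nlinarith [abs_nonneg (x i₀)]
  apply hx0
  funext i
  have h3 := hmax i (Finset.mem_univ i)
  have : |x i| = 0 := le_antisymm (by linarith) (abs_nonneg _)
  simpa [abs_eq_zero] using this

/-- the discounted occupation vector -/
def wfun (δ : ℝ) (p q : Fin 5 → ℝ) : Fin 4 → ℝ :=
  Matrix.vecMul (vInit p q) (1 - δ • Mmat p q)⁻¹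

/-- round-`k` state distribution -/
def dseq (p q : Fin 5 → ℝ) : ℕ → Fin 4 → ℝ
  | 0 => vInit p q
  | (k+1) => Matrix.vecMul (dseq p q k) (Mmat p q)

section WProps

variable {δ T S : ℝ} {p q : Fin 5 → ℝ}

lemma dseq_nonneg (hp : unitBox p) (hq : unitBox q) (k : ℕ) (i : Fin 4) :
    0 ≤ dseq p q k i := by
  induction k generalizing i with
  | zero => exact vInit_nonneg hp hq i
  | succ k ih =>
    show 0 ≤ Matrix.vecMul (dseq p q k) (Mmat p q) i
    rw [Matrix.vecMul, dotProduct]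
    exact Finset.sum_nonneg fun j _ => mul_nonneg (ih j) (Mmat_nonneg hp hq j i)

lemma dseq_sum (hp : unitBox p) (hq : unitBox q) (k : ℕ) :
    ∑ i, dseq p q k i = 1 := by
  induction k with
  | zero => exact vInit_sum p q
  | succ k ih =>
    show ∑ i, Matrix.vecMul (dseq p q k) (Mmat p q) i = 1
    have : ∑ i, Matrix.vecMul (dseq p q k) (Mmat p q) i
        = ∑ j, (dseq p q k j) * ∑ i, Mmat p q j i := by
      simp only [Matrix.vecMul, dotProduct, Finset.mul_sum]
      rw [Finset.sum_comm]
    rw [this]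
    simp only [Mmat_rowsum, mul_one, ih]

lemma dseq_le_one (hp : unitBox p) (hq : unitBox q) (k : ℕ) (i : Fin 4) :
    dseq p q k i ≤ 1 := by
  have := dseq_sum hp hq (q := q) (p := p) k
  calc dseq p q k i ≤ ∑ j, dseq p q k j :=
        Finset.single_le_sum (fun j _ => dseq_nonneg hp hq k j) (Finset.mem_univ i)
  _ = 1 := this

end WProps

section Expand

variable {δ : ℝ} {p q : Fin 5 → ℝ}

lemma detA_ne (hδ0 : 0 ≤ δ) (hδ1 : δ < 1) (hp : unitBox p) (hq : unitBox q) :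
    (1 - δ • Mmat p q).det ≠ 0 :=
  det_one_sub_smul_ne_zero δ hδ0 hδ1 _ (Mmat_nonneg hp hq) (Mmat_rowsum p q)

lemma vecMul_inv_rec (hδ0 : 0 ≤ δ) (hδ1 : δ < 1) (hp : unitBox p) (hq : unitBox q)
    (x : Fin 4 → ℝ) :
    Matrix.vecMul x (1 - δ • Mmat p q)⁻¹
      = x + δ • Matrix.vecMul (Matrix.vecMul x (Mmat p q)) (1 - δ • Mmat p q)⁻¹ := by
  set A := 1 - δ • Mmat p q with hA
  have hu : IsUnit A.det := isUnit_iff_ne_zero.mpr (detA_ne hδ0 hδ1 hp hq)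
  have h1 : Matrix.vecMul (Matrix.vecMul x A) A⁻¹ = x := by
    rw [Matrix.vecMul_vecMul, Matrix.mul_nonsing_inv A hu, Matrix.vecMul_one]
  have h2 : Matrix.vecMul x A = x - δ • Matrix.vecMul x (Mmat p q) := by
    funext j
    simp [hA, Matrix.vecMul, dotProduct, Matrix.sub_apply, Matrix.smul_apply,
      Matrix.one_apply, smul_eq_mul]
    rw [Finset.sum_congr rfl (fun i (_ : i ∈ Finset.univ) => mul_sub (x i) _ _),
      Finset.sum_sub_distrib]
    simp [mul_ite, mul_one, mul_zero, Finset.sum_ite_eq', Finset.mul_sum,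
      mul_comm, mul_left_comm]
  rw [h2, Matrix.sub_vecMul] at h1
  have h3 : Matrix.vecMul (δ • Matrix.vecMul x (Mmat p q)) A⁻¹
      = δ • Matrix.vecMul (Matrix.vecMul x (Mmat p q)) A⁻¹ := by
    rw [Matrix.smul_vecMul]
  rw [h3] at h1
  funext j
  have := congrFun h1 j
  simp only [Pi.sub_apply, Pi.add_apply, Pi.smul_apply, smul_eq_mul] at this ⊢
  linarith

lemma wfun_expand (hδ0 : 0 ≤ δ) (hδ1 : δ < 1) (hp : unitBox p) (hq : unitBox q) (n : ℕ) :
    wfun δ p q = (∑ k ∈ Finset.range n, δ ^ k • dseq p q k)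
      + δ ^ n • Matrix.vecMul (dseq p q n) (1 - δ • Mmat p q)⁻¹ := by
  induction n with
  | zero => simp [wfun, dseq]
  | succ n ih =>
    rw [ih, Finset.sum_range_succ, vecMul_inv_rec hδ0 hδ1 hp hq (dseq p q n)]
    show _ = _ + δ ^ (n+1) • Matrix.vecMul (dseq p q (n+1)) _
    have : dseq p q (n+1) = Matrix.vecMul (dseq p q n) (Mmat p q) := rfl
    rw [this, smul_add, smul_smul]
    rw [add_assoc, pow_succ]

/-- bound for the error term -/
lemma err_bound (hδ0 : 0 ≤ δ) (hδ1 : δ < 1) (hp : unitBox p) (hq : unitBox q)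
    (n : ℕ) (j : Fin 4) :
    |Matrix.vecMul (dseq p q n) (1 - δ • Mmat p q)⁻¹ j|
      ≤ ∑ i, |(1 - δ • Mmat p q)⁻¹ i j| := by
  have h1 : Matrix.vecMul (dseq p q n) (1 - δ • Mmat p q)⁻¹ j
      = ∑ i, dseq p q n i * (1 - δ • Mmat p q)⁻¹ i j := rfl
  rw [h1]
  calc |∑ i, dseq p q n i * (1 - δ • Mmat p q)⁻¹ i j|
      ≤ ∑ i, |dseq p q n i * (1 - δ • Mmat p q)⁻¹ i j| := Finset.abs_sum_le_sum_abs _ _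
  _ ≤ ∑ i, |(1 - δ • Mmat p q)⁻¹ i j| := by
      apply Finset.sum_le_sum
      intro i _
      rw [abs_mul, abs_of_nonneg (dseq_nonneg hp hq n i)]
      exact mul_le_of_le_one_left (abs_nonneg _) (dseq_le_one hp hq n i)

lemma wfun_ge (hδ0 : 0 < δ) (hδ1 : δ < 1) (hp : unitBox p) (hq : unitBox q)
    (k : ℕ) (j : Fin 4) :
    δ ^ k * dseq p q k j ≤ wfun δ p q j := by
  set B := ∑ i, |(1 - δ • Mmat p q)⁻¹ i j| with hB
  have key : ∀ n, k < n → δ ^ k * dseq p q k j - δ ^ n * B ≤ wfun δ p q j := by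
    intro n hkn
    have hex := congrFun (wfun_expand hδ0.le hδ1 hp hq n) j
    have hsum : (∑ m ∈ Finset.range n, δ ^ m • dseq p q m) j
        = ∑ m ∈ Finset.range n, δ ^ m * dseq p q m j := by
      simp [Finset.sum_apply]
    have h1 : δ ^ k * dseq p q k j ≤ ∑ m ∈ Finset.range n, δ ^ m * dseq p q m j :=
      Finset.single_le_sum (f := fun m => δ ^ m * dseq p q m j)
        (fun m _ => mul_nonneg (pow_nonneg hδ0.le m) (dseq_nonneg hp hq m j))
        (Finset.mem_range.mpr hkn)
    have h2 : |Matrix.vecMul (dseq p q n) (1 - δ • Mmat p q)⁻¹ j| ≤ B :=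
      err_bound hδ0.le hδ1 hp hq n j
    have h3 := abs_le.mp h2
    have h4 : wfun δ p q j = (∑ m ∈ Finset.range n, δ ^ m * dseq p q m j)
        + δ ^ n * Matrix.vecMul (dseq p q n) (1 - δ • Mmat p q)⁻¹ j := by
      rw [hex]; simp [hsum]
    nlinarith [pow_nonneg hδ0.le n, pow_pos hδ0 n,
      mul_le_mul_of_nonneg_left h3.1 (pow_nonneg hδ0.le n)]
  have hlim : Filter.Tendsto (fun n => δ ^ k * dseq p q k j - δ ^ n * B)
      Filter.atTop (nhds (δ ^ k * dseq p q k j)) := by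
    have : Filter.Tendsto (fun n : ℕ => δ ^ n * B) Filter.atTop (nhds 0) := by
      simpa using (tendsto_pow_atTop_nhds_zero_of_lt_one hδ0.le hδ1).mul_const B
    simpa using (tendsto_const_nhds (x := δ ^ k * dseq p q k j)).sub this
  exact le_of_tendsto hlim (Filter.eventually_atTop.mpr ⟨k + 1, fun n hn => key n hn⟩)

lemma wfun_nonneg (hδ0 : 0 < δ) (hδ1 : δ < 1) (hp : unitBox p) (hq : unitBox q) (j : Fin 4) :
    0 ≤ wfun δ p q j := by
  have := wfun_ge hδ0 hδ1 hp hq 0 j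
  have := dseq_nonneg hp hq (q := q) (p := p) 0 j
  simpa using le_trans (by nlinarith) (wfun_ge hδ0 hδ1 hp hq 0 j)

lemma wfun_eq_zero (hδ0 : 0 < δ) (hδ1 : δ < 1) (hp : unitBox p) (hq : unitBox q) (j : Fin 4)
    (h : ∀ k, dseq p q k j = 0) : wfun δ p q j = 0 := by
  set B := ∑ i, |(1 - δ • Mmat p q)⁻¹ i j| with hB
  have key : ∀ n, |wfun δ p q j| ≤ δ ^ n * B := by
    intro n
    have hex := congrFun (wfun_expand hδ0.le hδ1 hp hq n) j
    have h4 : wfun δ p q j = δ ^ n * Matrix.vecMul (dseq p q n) (1 - δ • Mmat p q)⁻¹ j := by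
      rw [hex]
      simp [Finset.sum_apply, h]
    rw [h4, abs_mul, abs_of_nonneg (pow_nonneg hδ0.le n)]
    exact mul_le_mul_of_nonneg_left (err_bound hδ0.le hδ1 hp hq n j) (pow_nonneg hδ0.le n)
  have hlim : Filter.Tendsto (fun n : ℕ => δ ^ n * B) Filter.atTop (nhds 0) := by
    simpa using (tendsto_pow_atTop_nhds_zero_of_lt_one hδ0.le hδ1).mul_const B
  have h0 : |wfun δ p q j| ≤ 0 :=
    ge_of_tendsto hlim (Filter.Eventually.of_forall key)
  exact abs_eq_zero.mp (le_antisymm h0 (abs_nonneg _))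

lemma wfun_vecMul (hδ0 : 0 ≤ δ) (hδ1 : δ < 1) (hp : unitBox p) (hq : unitBox q) :
    Matrix.vecMul (wfun δ p q) (1 - δ • Mmat p q) = vInit p q := by
  rw [wfun, Matrix.vecMul_vecMul,
    Matrix.nonsing_inv_mul _ (isUnit_iff_ne_zero.mpr (detA_ne hδ0 hδ1 hp hq)),
    Matrix.vecMul_one]

end Expand

lemma payoff_identity (δ T S : ℝ) (p q : Fin 5 → ℝ) (hδ0 : 0 < δ) (hδ1 : δ < 1)
    (hp : unitBox p) (hq : unitBox q) (φ χ κ : ℝ) (hφ : 0 < φ)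
    (hz1 : δ * p 1 + (1 - δ) * p 0 = 1 - φ * (χ - 1) * (1 - κ))
    (hz2 : δ * p 2 + (1 - δ) * p 0 = 1 - φ * (χ * T - S - (χ - 1) * κ))
    (hz3 : δ * p 3 + (1 - δ) * p 0 = φ * (T - χ * S + (χ - 1) * κ))
    (hz4 : δ * p 4 + (1 - δ) * p 0 = φ * (χ - 1) * κ) :
    (χ * (1 - S) + T - 1) * sY δ T S p q
      = (T - S) + (1 - S) * (χ - 1) * κ
        - (2 - T - S) * (T - S) * ((1 - δ) * wfun δ p q 1)
        - (T - S) * ((1 - δ) * wfun δ p q 3) := by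
  have hwA := wfun_vecMul hδ0.le hδ1 hp hq
  have hE0 := congrFun hwA 0
  have hE1 := congrFun hwA 1
  have hE2 := congrFun hwA 2
  have hE3 := congrFun hwA 3
  simp [Matrix.vecMul, dotProduct, Fin.sum_univ_four, Matrix.sub_apply,
    Matrix.smul_apply, Matrix.one_apply, Mmat, vInit, smul_eq_mul] at hE0 hE1 hE2 hE3
  have hsY : sY δ T S p q = (1 - δ) * (wfun δ p q 0 * 1 + wfun δ p q 1 * T
      + wfun δ p q 2 * S + wfun δ p q 3 * 0) := by
    simp [sY, payoff, dotProduct, Fin.sum_univ_four, SYvec, wfun]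
  set w0 := wfun δ p q 0 with hw0
  set w1 := wfun δ p q 1 with hw1
  set w2 := wfun δ p q 2 with hw2
  set w3 := wfun δ p q 3 with hw3
  have hsum : (1 - δ) * (w0 + w1 + w2 + w3) = 1 := by
    linear_combination hE0 + hE1 + hE2 + hE3
  have hswp : δ * (w0 * p 1 + w1 * p 2 + w2 * p 3 + w3 * p 4) = w0 + w1 - p 0 := by
    linear_combination (-1 : ℝ) * hE0 - hE1
  have hkey : φ * (χ * (w0 + T * w1 + S * w2) - (w0 + S * w1 + T * w2)
      - (χ - 1) * κ * (w0 + w1 + w2 + w3)) = 0 := by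
    linear_combination w0 * hz1 + w1 * hz2 + w2 * hz3 + w3 * hz4 - hswp - p 0 * hsum
  have hX : χ * (w0 + T * w1 + S * w2) - (w0 + S * w1 + T * w2)
      - (χ - 1) * κ * (w0 + w1 + w2 + w3) = 0 :=
    (mul_eq_zero.mp hkey).resolve_left (ne_of_gt hφ)
  rw [hsY]
  linear_combination ((1 - δ) * (1 - S)) * hX + (T - S + (1 - S) * (χ - 1) * κ) * hsum

lemma two_nonneg_sum_zero {a b : ℝ} (ha : 0 ≤ a) (hb : 0 ≤ b) (h : a + b = 0) :
    a = 0 ∧ b = 0 := ⟨by linarith, by linarith⟩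

lemma dseq_ones (p : Fin 5 → ℝ) (k : ℕ) :
    dseq p (fun _ => 1) k 1 = 0 ∧ dseq p (fun _ => 1) k 3 = 0 := by
  induction k with
  | zero => constructor <;> simp [dseq, vInit]
  | succ k ih =>
    constructor <;>
    · show Matrix.vecMul (dseq p (fun _ => 1) k) (Mmat p (fun _ => 1)) _ = 0
      simp [Matrix.vecMul, dotProduct, Fin.sum_univ_four, Mmat]

lemma terminal_structure (p q : Fin 5 → ℝ) (hp : unitBox p) (hq : unitBox q)
    (hp3 : p 0 = 0 → 0 < p 3)
    (hd : ∀ k, dseq p q k 1 = 0 ∧ dseq p q k 3 = 0) :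
    ((q 0 = 1 ∧ q 1 = 1 ∧ q 2 = 1) ∨ (p 0 = 1 ∧ p 1 = 1 ∧ q 0 = 1 ∧ q 1 = 1)) ∧
      ((p 0 < 1 ∨ p 1 < 1) → (q 0 = 1 ∧ q 1 = 1 ∧ q 2 = 1)) := by
  have hp0 := hp 0; have hp1 := hp 1; have hp3' := hp 3
  have hq1 := hq 1; have hq2 := hq 2
  -- round 0
  have hd00 : p 0 * (1 - q 0) = 0 := by
    have := (hd 0).1; simpa [dseq, vInit] using this
  have hd03 : (1 - p 0) * (1 - q 0) = 0 := by
    have := (hd 0).2; simpa [dseq, vInit] using this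
  have hq0 : q 0 = 1 := by nlinarith [hd00, hd03]
  -- round 1
  have hd11 : p 0 * (p 1 * (1 - q 1)) + (1 - p 0) * (p 3 * (1 - q 2)) = 0 := by
    have h := (hd 1).1
    show _ = (0:ℝ)
    have : dseq p q 1 1 = Matrix.vecMul (vInit p q) (Mmat p q) 1 := rfl
    rw [this] at h
    simp [Matrix.vecMul, dotProduct, Fin.sum_univ_four, Mmat, vInit, hq0] at h
    linear_combination h
  have hd13 : p 0 * ((1 - p 1) * (1 - q 1)) + (1 - p 0) * ((1 - p 3) * (1 - q 2)) = 0 := by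
    have h := (hd 1).2
    have : dseq p q 1 3 = Matrix.vecMul (vInit p q) (Mmat p q) 3 := rfl
    rw [this] at h
    simp [Matrix.vecMul, dotProduct, Fin.sum_univ_four, Mmat, vInit, hq0] at h
    linear_combination h
  have hsum1 : p 0 * (1 - q 1) + (1 - p 0) * (1 - q 2) = 0 := by
    linear_combination hd11 + hd13
  have hA : p 0 * (1 - q 1) = 0 := by
    have n1 : 0 ≤ p 0 * (1 - q 1) := mul_nonneg hp0.1 (by linarith)
    have n2 : 0 ≤ (1 - p 0) * (1 - q 2) := mul_nonneg (by linarith) (by linarith)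
    linarith
  have hB : (1 - p 0) * (1 - q 2) = 0 := by
    have n1 : 0 ≤ p 0 * (1 - q 1) := mul_nonneg hp0.1 (by linarith)
    linarith
  -- round 2 : entries of dseq 1 at indices 0, 2 and the vanishing of dseq 2
  have hd20 : (p 0 * (p 1 * q 1) + (1 - p 0) * (p 3 * q 2)) * (p 1 * (1 - q 1))
      + (p 0 * ((1 - p 1) * q 1) + (1 - p 0) * ((1 - p 3) * q 2)) * (p 3 * (1 - q 2)) = 0 := by
    have h := (hd 2).1
    have e2 : dseq p q 2 1 = Matrix.vecMul (Matrix.vecMul (vInit p q) (Mmat p q)) (Mmat p q) 1 := rfl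
    rw [e2] at h
    simp [Matrix.vecMul, dotProduct, Fin.sum_univ_four, Mmat, vInit, hq0] at h
    linear_combination h - (p 2 * (1 - q 3)) * hd11 - (p 4 * (1 - q 4)) * hd13
  have hd23 : (p 0 * (p 1 * q 1) + (1 - p 0) * (p 3 * q 2)) * ((1 - p 1) * (1 - q 1))
      + (p 0 * ((1 - p 1) * q 1) + (1 - p 0) * ((1 - p 3) * q 2)) * ((1 - p 3) * (1 - q 2)) = 0 := by
    have h := (hd 2).2
    have e2 : dseq p q 2 3 = Matrix.vecMul (Matrix.vecMul (vInit p q) (Mmat p q)) (Mmat p q) 3 := rfl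
    rw [e2] at h
    simp [Matrix.vecMul, dotProduct, Fin.sum_univ_four, Mmat, vInit, hq0] at h
    linear_combination h - ((1 - p 2) * (1 - q 3)) * hd11 - ((1 - p 4) * (1 - q 4)) * hd13
  have hsum2 : (p 0 * (p 1 * q 1) + (1 - p 0) * (p 3 * q 2)) * (1 - q 1)
      + (p 0 * ((1 - p 1) * q 1) + (1 - p 0) * ((1 - p 3) * q 2)) * (1 - q 2) = 0 := by
    linear_combination hd20 + hd23
  -- nonnegativity of the four atomic terms
  have m1 : 0 ≤ p 0 * (p 1 * q 1) * (1 - q 1) := by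
    apply mul_nonneg (mul_nonneg hp0.1 (mul_nonneg hp1.1 hq1.1)); linarith
  have m2 : 0 ≤ (1 - p 0) * (p 3 * q 2) * (1 - q 1) := by
    apply mul_nonneg (mul_nonneg (by linarith) (mul_nonneg hp3'.1 hq2.1)); linarith
  have m3 : 0 ≤ p 0 * ((1 - p 1) * q 1) * (1 - q 2) := by
    apply mul_nonneg (mul_nonneg hp0.1 (mul_nonneg (by linarith) hq1.1)); linarith
  have m4 : 0 ≤ (1 - p 0) * ((1 - p 3) * q 2) * (1 - q 2) := by
    apply mul_nonneg (mul_nonneg (by linarith) (mul_nonneg (by linarith) hq2.1)); linarith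
  have hsum2' : p 0 * (p 1 * q 1) * (1 - q 1) + (1 - p 0) * (p 3 * q 2) * (1 - q 1)
      + p 0 * ((1 - p 1) * q 1) * (1 - q 2) + (1 - p 0) * ((1 - p 3) * q 2) * (1 - q 2) = 0 := by
    linear_combination hsum2
  have t2 : (1 - p 0) * (p 3 * q 2) * (1 - q 1) = 0 := by linarith
  have t3 : p 0 * ((1 - p 1) * q 1) * (1 - q 2) = 0 := by linarith
  -- case analysis
  by_cases hP0 : p 0 = 1
  · have hq1' : q 1 = 1 := by
      have h' := hA; rw [hP0] at h'; linarith
    by_cases hP1 : p 1 = 1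
    · exact ⟨Or.inr ⟨hP0, hP1, hq0, hq1'⟩, fun h => by
        rcases h with h | h <;> [exact absurd hP0 (by linarith); exact absurd hP1 (by linarith)]⟩
    · have hq2' : q 2 = 1 := by
        have h0 := t3; rw [hP0, hq1'] at h0
        have h' : (1 - p 1) * (1 - q 2) = 0 := by linear_combination h0
        rcases mul_eq_zero.mp h' with h'' | h''
        · exact absurd (by linarith : p 1 = 1) hP1
        · linarith
      exact ⟨Or.inl ⟨hq0, hq1', hq2'⟩, fun _ => ⟨hq0, hq1', hq2'⟩⟩
  · have hP0lt : p 0 < 1 := lt_of_le_of_ne hp0.2 hP0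
    have hq2' : q 2 = 1 := by
      rcases mul_eq_zero.mp hB with h'' | h''
      · exact absurd (by linarith : p 0 = 1) hP0
      · linarith
    have hq1' : q 1 = 1 := by
      by_cases hP00 : p 0 = 0
      · have hp3pos := hp3 hP00
        have h0 := t2; rw [hP00, hq2'] at h0
        have h' : p 3 * (1 - q 1) = 0 := by linear_combination h0
        rcases mul_eq_zero.mp h' with h'' | h''
        · exact absurd h'' (ne_of_gt hp3pos)
        · linarith
      · have hp0pos : 0 < p 0 := lt_of_le_of_ne hp0.1 (Ne.symm hP00)
        rcases mul_eq_zero.mp hA with h'' | h''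
        · exact absurd h'' (ne_of_gt hp0pos)
        · linarith
    exact ⟨Or.inl ⟨hq0, hq1', hq2'⟩, fun _ => ⟨hq0, hq1', hq2'⟩⟩

/-- every adapting path of the adaptive player against a pcZD
strategy terminates at unconditional cooperation. -/
theorem adapting_paths_lead_to_cooperation
    (T S δ : ℝ) (hS : S < 0) (hT : 1 < T) (hTS2 : T + S < 2) (hTS0 : 0 < T + S)
    (hδc : max ((T - 1) / T) (-S / (1 - S)) < δ) (hδ1 : δ < 1)
    (p : Fin 5 → ℝ) (hp : unitBox p) (hpczd : IsPcZD δ T S p)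
    (N : ℕ) (lam : ℕ → Fin 5 → ℝ)
    (hmem : ∀ n ≤ N, unitBox (lam n))
    (hA1 : ∀ n1 n2 : ℕ, n1 < n2 → n2 ≤ N →
      sY δ T S p (lam n1) < sY δ T S p (lam n2))
    (hA2 : ¬ ∃ (N' : ℕ) (lam' : ℕ → Fin 5 → ℝ), N < N' ∧
      (∀ n ≤ N', unitBox (lam' n)) ∧
      (∀ n ≤ N, lam' n = lam n) ∧
      (∀ n1 n2 : ℕ, n1 < n2 → n2 ≤ N' →
        sY δ T S p (lam' n1) < sY δ T S p (lam' n2))) :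
    ((lam N 0 = 1 ∧ lam N 1 = 1 ∧ lam N 2 = 1) ∨
      (p 0 = 1 ∧ p 1 = 1 ∧ lam N 0 = 1 ∧ lam N 1 = 1)) ∧
    ((p 0 < 1 ∨ p 1 < 1) → (lam N 0 = 1 ∧ lam N 1 = 1 ∧ lam N 2 = 1)) := by
  obtain ⟨φ, χ, κ, hφ, hχ, hz1, hz2, hz3, hz4⟩ := hpczd
  -- δ is positive
  have hδ0 : 0 < δ := by
    have h1 : (0:ℝ) < (T - 1) / T := div_pos (by linarith) (by linarith)
    have h2 : (T - 1) / T ≤ max ((T - 1) / T) (-S / (1 - S)) := le_max_left _ _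
    linarith
  -- the all-ones strategy
  set onesQ : Fin 5 → ℝ := fun _ => 1 with honesQ
  have honesBox : unitBox onesQ := fun i => ⟨by norm_num, by norm_num⟩
  -- lam N is a global maximizer
  have hqN : unitBox (lam N) := hmem N le_rfl
  have hmax : ∀ q', unitBox q' → sY δ T S p q' ≤ sY δ T S p (lam N) := by
    intro q' hq'
    by_contra hlt
    push_neg at hlt
    apply hA2
    refine ⟨N + 1, fun n => if n ≤ N then lam n else q', by omega, ?_, ?_, ?_⟩
    · intro n hn
      by_cases hnN : n ≤ N
      · simpa [hnN] using hmem n hnN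
      · simpa [hnN] using hq'
    · intro n hn; simp [hn]
    · intro n1 n2 h12 h2N
      by_cases h2 : n2 ≤ N
      · have h1 : n1 ≤ N := by omega
        simpa [h1, h2] using hA1 n1 n2 h12 h2
      · have h2' : n2 = N + 1 := by omega
        have h1 : n1 ≤ N := by omega
        subst h2'
        show sY δ T S p (if n1 ≤ N then lam n1 else q')
            < sY δ T S p (if N + 1 ≤ N then lam (N + 1) else q')
        rw [if_pos h1, if_neg (by omega : ¬ N + 1 ≤ N)]
        rcases eq_or_lt_of_le h1 with h1' | h1'
        · rw [h1']; exact hlt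
        · exact lt_trans (hA1 n1 N h1' le_rfl) hlt
  -- positivity facts
  have hD3 : 0 < χ * (1 - S) + T - 1 := by nlinarith
  have hκ : 0 ≤ (χ - 1) * κ := by
    have h4 := hp 4
    have h0 := hp 0
    have hL : 0 ≤ δ * p 4 + (1 - δ) * p 0 := by
      have := mul_nonneg hδ0.le h4.1
      have := mul_nonneg (by linarith : (0:ℝ) ≤ 1 - δ) h0.1
      linarith
    rw [hz4] at hL
    nlinarith
  -- payoff identities
  have idq := payoff_identity δ T S p (lam N) hδ0 hδ1 hp hqN φ χ κ hφ hz1 hz2 hz3 hz4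
  have idones := payoff_identity δ T S p onesQ hδ0 hδ1 hp honesBox φ χ κ hφ hz1 hz2 hz3 hz4
  have hones1 : wfun δ p onesQ 1 = 0 :=
    wfun_eq_zero hδ0 hδ1 hp honesBox 1 (fun k => (dseq_ones p k).1)
  have hones3 : wfun δ p onesQ 3 = 0 :=
    wfun_eq_zero hδ0 hδ1 hp honesBox 3 (fun k => (dseq_ones p k).2)
  rw [hones1, hones3] at idones
  -- compare
  have hle := hmax onesQ honesBox
  have hmul : (χ * (1 - S) + T - 1) * sY δ T S p onesQ
      ≤ (χ * (1 - S) + T - 1) * sY δ T S p (lam N) :=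
    mul_le_mul_of_nonneg_left hle hD3.le
  rw [idq, idones] at hmul
  have hy1 : 0 ≤ (1 - δ) * wfun δ p (lam N) 1 :=
    mul_nonneg (by linarith) (wfun_nonneg hδ0 hδ1 hp hqN 1)
  have hy3 : 0 ≤ (1 - δ) * wfun δ p (lam N) 3 :=
    mul_nonneg (by linarith) (wfun_nonneg hδ0 hδ1 hp hqN 3)
  have hc2 : 0 < (2 - T - S) * (T - S) := mul_pos (by linarith) (by linarith)
  have hc4 : 0 < T - S := by linarith
  simp only [mul_zero, sub_zero] at hmul
  have hX1 : 0 ≤ (2 - T - S) * (T - S) * ((1 - δ) * wfun δ p (lam N) 1) :=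
    mul_nonneg hc2.le hy1
  have hX3 : 0 ≤ (T - S) * ((1 - δ) * wfun δ p (lam N) 3) :=
    mul_nonneg hc4.le hy3
  have hY1 : (1 - δ) * wfun δ p (lam N) 1 = 0 := by
    have hle1 : (2 - T - S) * (T - S) * ((1 - δ) * wfun δ p (lam N) 1)
        ≤ (2 - T - S) * (T - S) * 0 := by rw [mul_zero]; linarith
    exact le_antisymm (le_of_mul_le_mul_left (by linarith [hle1]) hc2) hy1
  have hY3 : (1 - δ) * wfun δ p (lam N) 3 = 0 := by
    have hle3 : (T - S) * ((1 - δ) * wfun δ p (lam N) 3)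
        ≤ (T - S) * 0 := by rw [mul_zero]; linarith
    exact le_antisymm (le_of_mul_le_mul_left (by linarith [hle3]) hc4) hy3
  have hδne : (1 - δ) ≠ 0 := by linarith
  have hw1 : wfun δ p (lam N) 1 = 0 := (mul_eq_zero.mp hY1).resolve_left hδne
  have hw3 : wfun δ p (lam N) 3 = 0 := (mul_eq_zero.mp hY3).resolve_left hδne
  -- every round avoids states CD, DD
  have hdzero : ∀ k, dseq p (lam N) k 1 = 0 ∧ dseq p (lam N) k 3 = 0 := by
    intro k
    have hk := pow_pos hδ0 k
    constructor
    · have hge := wfun_ge hδ0 hδ1 hp hqN k 1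
      rw [hw1] at hge
      have hnn := dseq_nonneg hp hqN k (1 : Fin 4)
      exact le_antisymm (le_of_mul_le_mul_left (by rw [mul_zero]; exact hge) hk) hnn
    · have hge := wfun_ge hδ0 hδ1 hp hqN k 3
      rw [hw3] at hge
      have hnn := dseq_nonneg hp hqN k (3 : Fin 4)
      exact le_antisymm (le_of_mul_le_mul_left (by rw [mul_zero]; exact hge) hk) hnn
  -- p 3 is positive when p 0 = 0
  have hp3pos : p 0 = 0 → 0 < p 3 := by
    intro h0
    rw [h0] at hz3
    have hχS : χ * S ≤ 1 * S := mul_le_mul_of_nonpos_right hχ hS.le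
    have hTχS : 0 < T - χ * S + (χ - 1) * κ := by linarith
    rw [mul_zero, add_zero] at hz3
    have hpos : 0 < δ * p 3 := by rw [hz3]; exact mul_pos hφ hTχS
    by_contra hc
    push_neg at hc
    have h2 : δ * p 3 ≤ 0 := mul_nonpos_iff.mpr (Or.inl ⟨hδ0.le, hc⟩)
    linarith
  exact terminal_structure p (lam N) hp hqN hp3pos hdzero


end ZDGame
end
end

section
/- For every p,q∈[0,1]^5 and every δ∈(0,1), the determinant D(p,q,1_4) is strictly positive, where 1_4=(1,1,1,1). -/
noncomputable section
namespace ZDGame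

open Matrix

private lemma fs2' : (Fin.succ 2 : Fin 4) = 3 := rfl
private lemma fc2' : ((2:Fin 3).castSucc : Fin 4) = 2 := rfl

private lemma det_fin_four' (A : Matrix (Fin 4) (Fin 4) ℝ) :
    A.det =
      A 0 0 * (A 1 1 * (A 2 2 * A 3 3 - A 2 3 * A 3 2)
        - A 1 2 * (A 2 1 * A 3 3 - A 2 3 * A 3 1)
        + A 1 3 * (A 2 1 * A 3 2 - A 2 2 * A 3 1))
      - A 0 1 * (A 1 0 * (A 2 2 * A 3 3 - A 2 3 * A 3 2)
        - A 1 2 * (A 2 0 * A 3 3 - A 2 3 * A 3 0)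
        + A 1 3 * (A 2 0 * A 3 2 - A 2 2 * A 3 0))
      + A 0 2 * (A 1 0 * (A 2 1 * A 3 3 - A 2 3 * A 3 1)
        - A 1 1 * (A 2 0 * A 3 3 - A 2 3 * A 3 0)
        + A 1 3 * (A 2 0 * A 3 1 - A 2 1 * A 3 0))
      - A 0 3 * (A 1 0 * (A 2 1 * A 3 2 - A 2 2 * A 3 1)
        - A 1 1 * (A 2 0 * A 3 2 - A 2 2 * A 3 0)
        + A 1 2 * (A 2 0 * A 3 1 - A 2 1 * A 3 0)) := by
  rw [Matrix.det_succ_row_zero]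
  simp [Fin.sum_univ_succ, Matrix.det_fin_three, Matrix.submatrix, Fin.succAbove,
    fs2', show ((1:Fin 3).castSucc : Fin 4) = 1 from rfl, fc2']
  ring

private lemma sub_smul_Mmat (a : ℝ) (p q : Fin 5 → ℝ) :
    (1 : Matrix (Fin 4) (Fin 4) ℝ) - a • Mmat p q =
    !![1 - a*(p 1 * q 1), -(a*(p 1 * (1 - q 1))), -(a*((1 - p 1) * q 1)), -(a*((1 - p 1) * (1 - q 1)));
       -(a*(p 2 * q 3)), 1 - a*(p 2 * (1 - q 3)), -(a*((1 - p 2) * q 3)), -(a*((1 - p 2) * (1 - q 3)));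
       -(a*(p 3 * q 2)), -(a*(p 3 * (1 - q 2))), 1 - a*((1 - p 3) * q 2), -(a*((1 - p 3) * (1 - q 2)));
       -(a*(p 4 * q 4)), -(a*(p 4 * (1 - q 4))), -(a*((1 - p 4) * q 4)), 1 - a*((1 - p 4) * (1 - q 4))] := by
  ext i j
  fin_cases i <;> fin_cases j <;>
    simp [Mmat, Matrix.one_apply, Matrix.sub_apply, Matrix.smul_apply]

set_option maxHeartbeats 1000000 in
private lemma key_det (δ : ℝ) (p q : Fin 5 → ℝ) :
    ((1 : Matrix (Fin 4) (Fin 4) ℝ) - δ • Mmat p q).det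
      = (1 - δ) * Dd δ p q ones4 := by
  rw [sub_smul_Mmat, Dd, det_fin_four', det_fin_four']
  simp only [Amat, ones4, Matrix.cons_val', Matrix.cons_val_zero, Matrix.cons_val_one,
    Matrix.head_cons, Matrix.empty_val', Matrix.cons_val_fin_one, Matrix.head_fin_const,
    Matrix.of_apply, Matrix.cons_val_two, Matrix.cons_val_three, Matrix.tail_cons]
  ring

private lemma diagpos (a m : ℝ) (ha0 : 0 ≤ a) (ha1 : a < 1) (hm0 : 0 ≤ m) (hm1 : m ≤ 1) :
    (0:ℝ) ≤ 1 - a * m := by nlinarith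

set_option maxHeartbeats 2000000 in
private lemma det_sub_ne (δ : ℝ) (hδ0 : 0 < δ) (hδ1 : δ < 1) (p q : Fin 5 → ℝ)
    (hp : unitBox p) (hq : unitBox q)
    (t : ℝ) (ht0 : 0 ≤ t) (ht1 : t ≤ 1) :
    ((1 : Matrix (Fin 4) (Fin 4) ℝ) - (t*δ) • Mmat p q).det ≠ 0 := by
  obtain ⟨hp1, hp1'⟩ := hp 1
  obtain ⟨hp2, hp2'⟩ := hp 2
  obtain ⟨hp3, hp3'⟩ := hp 3
  obtain ⟨hp4, hp4'⟩ := hp 4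
  obtain ⟨hq1, hq1'⟩ := hq 1
  obtain ⟨hq2, hq2'⟩ := hq 2
  obtain ⟨hq3, hq3'⟩ := hq 3
  obtain ⟨hq4, hq4'⟩ := hq 4
  have ha0 : 0 ≤ t * δ := by positivity
  have ha1 : t * δ < 1 := by nlinarith
  rw [sub_smul_Mmat]
  apply det_ne_zero_of_sum_row_lt_diag
  intro k
  rw [Finset.sum_erase_eq_sub (Finset.mem_univ k), Fin.sum_univ_four, sub_lt_iff_lt_add]
  have h1q1 : (0:ℝ) ≤ 1 - q 1 := by linarith
  have h1q2 : (0:ℝ) ≤ 1 - q 2 := by linarith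
  have h1q3 : (0:ℝ) ≤ 1 - q 3 := by linarith
  have h1q4 : (0:ℝ) ≤ 1 - q 4 := by linarith
  have h1p1 : (0:ℝ) ≤ 1 - p 1 := by linarith
  have h1p2 : (0:ℝ) ≤ 1 - p 2 := by linarith
  have h1p3 : (0:ℝ) ≤ 1 - p 3 := by linarith
  have h1p4 : (0:ℝ) ≤ 1 - p 4 := by linarith
  have hδ : (0:ℝ) ≤ δ := le_of_lt hδ0
  fin_cases k <;> simp [Real.norm_eq_abs]
  · rw [abs_of_nonneg ht0, abs_of_nonneg hδ, abs_of_nonneg hp1, abs_of_nonneg hq1,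
      abs_of_nonneg h1p1, abs_of_nonneg h1q1,
      abs_of_nonneg (diagpos (t*δ) (p 1 * q 1) ha0 ha1 (by nlinarith) (by nlinarith))]
    nlinarith [ha1]
  · rw [abs_of_nonneg ht0, abs_of_nonneg hδ, abs_of_nonneg hp2, abs_of_nonneg hq3,
      abs_of_nonneg h1p2, abs_of_nonneg h1q3,
      abs_of_nonneg (diagpos (t*δ) (p 2 * (1 - q 3)) ha0 ha1 (by nlinarith) (by nlinarith))]
    nlinarith [ha1]
  · rw [abs_of_nonneg ht0, abs_of_nonneg hδ, abs_of_nonneg hp3, abs_of_nonneg hq2,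
      abs_of_nonneg h1p3, abs_of_nonneg h1q2,
      abs_of_nonneg (diagpos (t*δ) ((1 - p 3) * q 2) ha0 ha1 (by nlinarith) (by nlinarith))]
    nlinarith [ha1]
  · rw [abs_of_nonneg ht0, abs_of_nonneg hδ, abs_of_nonneg hp4, abs_of_nonneg hq4,
      abs_of_nonneg h1p4, abs_of_nonneg h1q4,
      abs_of_nonneg (diagpos (t*δ) ((1 - p 4) * (1 - q 4)) ha0 ha1 (by nlinarith) (by nlinarith))]
    nlinarith [ha1]

/-- `D(p,q,1_4) > 0` for all strategies and all `δ ∈ (0,1)`. -/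
theorem Dpq1_pos (δ : ℝ) (hδ0 : 0 < δ) (hδ1 : δ < 1)
    (p q : Fin 5 → ℝ) (hp : unitBox p) (hq : unitBox q) :
    0 < Dd δ p q ones4 := by
  set f : ℝ → ℝ := fun t => ((1 : Matrix (Fin 4) (Fin 4) ℝ) - (t * δ) • Mmat p q).det with hf
  have hcont : Continuous f := by
    apply Continuous.matrix_det
    fun_prop
  have hne : ∀ t ∈ Set.Icc (0:ℝ) 1, f t ≠ 0 := fun t ht =>
    det_sub_ne δ hδ0 hδ1 p q hp hq t ht.1 ht.2
  have hf0 : f 0 = 1 := by simp [hf]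
  have hf1pos : 0 < f 1 := by
    by_contra h
    push_neg at h
    have h1 : f 1 ≠ 0 := hne 1 ⟨zero_le_one, le_refl 1⟩
    have h1' : f 1 < 0 := lt_of_le_of_ne h h1
    have h0mem : (0:ℝ) ∈ Set.Icc (f 1) (f 0) := ⟨le_of_lt h1', by rw [hf0]; exact zero_le_one⟩
    obtain ⟨s, hs, hfs⟩ := intermediate_value_Icc' zero_le_one hcont.continuousOn h0mem
    exact hne s hs hfs
  have hkey : f 1 = (1 - δ) * Dd δ p q ones4 := by
    rw [hf]
    simp only [one_mul]
    exact key_det δ p q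
  rw [hkey] at hf1pos
  have h1δ : 0 < 1 - δ := by linarith
  nlinarith [hf1pos, h1δ]


end ZDGame
end
end

section
/- Let p∈[0,1]^5, δ∈(0,1), and α,β,γ∈ℝ satisfy the zero-determinant conditions: −1+δp1+(1−δ)p0 = α+β+γ, −1+δp2+(1−δ)p0 = αS+βT+γ, δp3+(1−δ)p0 = αT+βS+γ, and δp4+(1−δ)p0 = γ. Then for every q∈[0,1]^5 the average expected payoffs satisfy α·s_X + β·s_Y + γ = 0. -/
noncomputable section
namespace ZDGame

open Matrix

set_option maxHeartbeats 2000000 in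
/-- a ZD strategy enforces the linear payoff relation
`α·s_X + β·s_Y + γ = 0` against every opponent. -/
theorem zd_enforces_linear_relation (δ T S : ℝ) (hδ0 : 0 < δ) (hδ1 : δ < 1)
    (p : Fin 5 → ℝ) (hp : unitBox p) (α β γ : ℝ)
    (h1 : -1 + δ * p 1 + (1 - δ) * p 0 = α + β + γ)
    (h2 : -1 + δ * p 2 + (1 - δ) * p 0 = α * S + β * T + γ)
    (h3 : δ * p 3 + (1 - δ) * p 0 = α * T + β * S + γ)
    (h4 : δ * p 4 + (1 - δ) * p 0 = γ) :
    ∀ q : Fin 5 → ℝ, unitBox q →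
      α * sX δ T S p q + β * sY δ T S p q + γ = 0 := by
  intro q hq
  have hp1 := hp 1; have hp2 := hp 2; have hp3 := hp 3; have hp4 := hp 4
  have g1 := hq 1; have g2 := hq 2; have g3 := hq 3; have g4 := hq 4
  have hnn : ∀ i j, 0 ≤ Mmat p q i j := by
    intro i j
    fin_cases i <;> fin_cases j <;>
      simp [Mmat, show ((⟨0, by omega⟩ : Fin 4)) = 0 from rfl,
        show ((⟨1, by omega⟩ : Fin 4)) = 1 from rfl,
        show ((⟨2, by omega⟩ : Fin 4)) = 2 from rfl,
        show ((⟨3, by omega⟩ : Fin 4)) = 3 from rfl] <;>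
      apply mul_nonneg <;> linarith
  have hrow : ∀ i, ∑ j, Mmat p q i j = 1 := by
    intro i
    fin_cases i <;>
      simp [Mmat, Fin.sum_univ_four, show ((⟨0, by omega⟩ : Fin 4)) = 0 from rfl,
        show ((⟨1, by omega⟩ : Fin 4)) = 1 from rfl,
        show ((⟨2, by omega⟩ : Fin 4)) = 2 from rfl,
        show ((⟨3, by omega⟩ : Fin 4)) = 3 from rfl] <;>
      ring
  have hdd : ∀ i, Mmat p q i i ≤ 1 := by
    intro i
    rw [← hrow i]
    exact Finset.single_le_sum (fun j _ => hnn i j) (Finset.mem_univ i)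
  have hdet : (1 - δ • Mmat p q).det ≠ 0 := by
    apply det_ne_zero_of_sum_row_lt_diag
    intro k
    have hk : ∀ j ∈ Finset.univ.erase k, ‖(1 - δ • Mmat p q) k j‖ = δ * Mmat p q k j := by
      intro j hj
      have hkj : k ≠ j := (Finset.ne_of_mem_erase hj).symm
      rw [Matrix.sub_apply, Matrix.smul_apply, Matrix.one_apply_ne hkj, smul_eq_mul,
        zero_sub, norm_neg, Real.norm_eq_abs, abs_of_nonneg (mul_nonneg hδ0.le (hnn k j))]
    rw [Finset.sum_congr rfl hk, ← Finset.mul_sum,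
      Finset.sum_erase_eq_sub (Finset.mem_univ k), hrow k,
      Matrix.sub_apply, Matrix.smul_apply, Matrix.one_apply_eq, smul_eq_mul,
      Real.norm_eq_abs, abs_of_pos (by nlinarith [hnn k k, hdd k])]
    nlinarith [hnn k k, hdd k]
  set w := Matrix.vecMul (vInit p q) (1 - δ • Mmat p q)⁻¹ with hwdef
  have hw : Matrix.vecMul w (1 - δ • Mmat p q) = vInit p q := by
    rw [hwdef, Matrix.vecMul_vecMul,
        Matrix.nonsing_inv_mul _ (isUnit_iff_ne_zero.mpr hdet), Matrix.vecMul_one]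
  have e0 := congrFun hw 0
  have e1 := congrFun hw 1
  have e2 := congrFun hw 2
  have e3 := congrFun hw 3
  simp only [Matrix.vecMul, dotProduct, Fin.sum_univ_four, Matrix.sub_apply,
    Matrix.one_apply, Matrix.smul_apply, smul_eq_mul, Mmat, vInit, Fin.isValue, Matrix.of_apply,
    Matrix.cons_val', Matrix.cons_val_zero, Matrix.cons_val_one, Matrix.head_cons,
    Matrix.empty_val', Matrix.cons_val_fin_one, Matrix.head_fin_const,
    Matrix.cons_val_two, Matrix.tail_cons, Matrix.cons_val_three,
    Fin.reduceEq, if_true, if_false, reduceIte] at e0 e1 e2 e3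
  simp only [sX, sY, payoff, dotProduct, Fin.sum_univ_four, SXvec, SYvec, ← hwdef,
    Fin.isValue, Matrix.cons_val_zero, Matrix.cons_val_one, Matrix.head_cons,
    Matrix.cons_val_two, Matrix.tail_cons, Matrix.cons_val_three]
  linear_combination (-(1-δ)*w 0)*h1 + (-(1-δ)*w 1)*h2 + (-(1-δ)*w 2)*h3 + (-(1-δ)*w 3)*h4
    + ((1-δ)*p 0 - γ - (1-δ))*(e0+e1) + ((1-δ)*p 0 - γ)*(e2+e3)

end ZDGame
end
end

section
/- Let T>1>0>S, δ∈(0,1), and let p∈[0,1]^5 be a pcZD strategy. Then p1 > p2 and p3 > p4 (equivalently, p1>0, 1−p2>0, p3>0, and 1−p4>0). -/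
noncomputable section
namespace ZDGame

open Matrix

/-- a pcZD strategy satisfies `p1 > p2` and `p3 > p4`
(equivalently `p1, 1-p2, p3, 1-p4 > 0`). -/
theorem pcZD_entry_inequalities (δ T S : ℝ) (hδ0 : 0 < δ) (hδ1 : δ < 1)
    (hT : 1 < T) (hS : S < 0)
    (p : Fin 5 → ℝ) (hp : unitBox p) (hpczd : IsPcZD δ T S p) :
    p 1 > p 2 ∧ p 3 > p 4 ∧
      0 < p 1 ∧ 1 - p 2 > 0 ∧ 0 < p 3 ∧ 1 - p 4 > 0 := by

  obtain ⟨φ, χ, κ, hφ, hχ, h1, h2, h3, h4⟩ := hpczd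
  have h12 : δ * p 1 - δ * p 2 = φ * (χ * (T - 1) + (1 - S)) := by
    linear_combination h1 - h2
  have h34 : δ * p 3 - δ * p 4 = φ * (T - χ * S) := by
    linear_combination h3 - h4
  have hx : 0 < χ * (T - 1) + (1 - S) := by nlinarith
  have hy : 0 < T - χ * S := by nlinarith
  have hp12 : p 2 < p 1 := by
    have h : δ * p 2 < δ * p 1 := by nlinarith [mul_pos hφ hx]
    exact (mul_lt_mul_iff_right₀ hδ0).mp h
  have hp34 : p 4 < p 3 := by
    have h : δ * p 4 < δ * p 3 := by nlinarith [mul_pos hφ hy]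
    exact (mul_lt_mul_iff_right₀ hδ0).mp h
  have b2 := hp 2
  have b4 := hp 4
  have b1 := hp 1
  have b3 := hp 3
  refine ⟨hp12, hp34, ?_, ?_, ?_, ?_⟩ <;> linarith [b1.1, b1.2, b2.1, b3.1, b4.1]


end ZDGame
end
end
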